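/- There exists an SPA-ST instance I and a stable matching M' in the HRT instance I' obtained from I by the cloning construction such that the matching M in I induced by M' (restricting M' to non-dummy residents and translating hospitals back to projects) is not stable in I. Concretely: take students s_1 with list p_1, p_2 and s_2 with list p_2, p_3; projects p_1, p_2 offered by l_1 and p_3 offered by l_2, all of capacity 1; lecturer preference lists l_1: s_2, s_1 and l_2: s_2; capacities d_1 = d_2 = 1. Then the HRT instance has a stable matching inducing M = {(s_1,p_1),(s_2,p_3)} in I, but M is blocked by (s_2,p_2). -/

import Mathlib

open scoped Classical
open Finset

/-- An instance of the Student-Project Allocation problem with lecturer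
preferences over students, with ties (SPA-ST).  Preferences are encoded by
rank functions: a lower rank means more preferred; equal ranks encode ties. -/
structure SPAST (S P L : Type) where
  /-- the lecturer offering each project -/
  lec : P → L
  /-- project capacities -/
  cap : P → ℕ
  /-- lecturer capacities -/
  dcap : L → ℕ
  /-- `acc s p` iff student `s` finds project `p` acceptable -/
  acc : S → P → Prop
  /-- student rank function (lower is better); meaningful on acceptable projects -/
  sRank : S → P → ℕ
  /-- lecturer rank function over students (lower is better) -/
  lRank : L → S → ℕ

variable {S P L : Type}

/-- students assigned to a project in `M` -/
noncomputable def projAssignees [Fintype S] (M : S → Option P) (p : P) : Finset S :=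
  Finset.univ.filter (fun s => M s = some p)

/-- students assigned to some project of lecturer `k` in `M` -/
noncomputable def lecAssignees [Fintype S] (I : SPAST S P L) (M : S → Option P) (k : L) :
    Finset S :=
  Finset.univ.filter (fun s => ∃ p, M s = some p ∧ I.lec p = k)

def IsMatching [Fintype S] (I : SPAST S P L) (M : S → Option P) : Prop :=
  (∀ s p, M s = some p → I.acc s p) ∧
  (∀ p, (projAssignees M p).card ≤ I.cap p) ∧
  (∀ k, (lecAssignees I M k).card ≤ I.dcap k)

def ProjFull [Fintype S] (I : SPAST S P L) (M : S → Option P) (p : P) : Prop :=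
  (projAssignees M p).card = I.cap p

def LecFull [Fintype S] (I : SPAST S P L) (M : S → Option P) (k : L) : Prop :=
  (lecAssignees I M k).card = I.dcap k

/-- `s` finds `p` acceptable and is unassigned or strictly prefers `p` to `M(s)`. -/
def WantsToMove (I : SPAST S P L) (M : S → Option P) (s : S) (p : P) : Prop :=
  I.acc s p ∧ (M s = none ∨ ∃ p', M s = some p' ∧ I.sRank s p < I.sRank s p')

/-- `(s, p)` is a blocking pair of `M`. -/
def Blocks [Fintype S] (I : SPAST S P L) (M : S → Option P) (s : S) (p : P) : Prop :=
  WantsToMove I M s p ∧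
  ( (¬ ProjFull I M p ∧ ¬ LecFull I M (I.lec p)) ∨
    (¬ ProjFull I M p ∧ LecFull I M (I.lec p) ∧
      (s ∈ lecAssignees I M (I.lec p) ∨
       ∃ s' ∈ lecAssignees I M (I.lec p), I.lRank (I.lec p) s < I.lRank (I.lec p) s')) ∨
    (ProjFull I M p ∧
       ∃ s' ∈ projAssignees M p, I.lRank (I.lec p) s < I.lRank (I.lec p) s') )

def Stable [Fintype S] (I : SPAST S P L) (M : S → Option P) : Prop :=
  IsMatching I M ∧ ∀ s p, ¬ Blocks I M s p

/-- the number of assigned agents in a matching -/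
noncomputable def msize {A B : Type} [Fintype A] (M : A → Option B) : ℕ :=
  (Finset.univ.filter (fun a => (M a).isSome)).card

/-- An instance of the Hospitals/Residents problem with Ties (HRT), encoded by
rank functions (lower rank = more preferred; equal ranks are ties). -/
structure HRT (R H : Type) where
  /-- hospital capacities -/
  cap : H → ℕ
  /-- `acc r h` iff `(r, h)` is an acceptable pair -/
  acc : R → H → Prop
  /-- resident rank function over hospitals -/
  rRank : R → H → ℕ
  /-- hospital rank function over residents -/
  hRank : H → R → ℕ

/-- residents assigned to a hospital -/
noncomputable def hospAssignees {R H : Type} [Fintype R] (M : R → Option H) (h : H) :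
    Finset R :=
  Finset.univ.filter (fun r => M r = some h)

def HIsMatching {R H : Type} [Fintype R] (J : HRT R H) (M : R → Option H) : Prop :=
  (∀ r h, M r = some h → J.acc r h) ∧ (∀ h, (hospAssignees M h).card ≤ J.cap h)

/-- `(r, h)` is a blocking pair of `M` in HRT -/
def HBlocks {R H : Type} [Fintype R] (J : HRT R H) (M : R → Option H) (r : R) (h : H) :
    Prop :=
  J.acc r h ∧
  (M r = none ∨ ∃ h', M r = some h' ∧ J.rRank r h < J.rRank r h') ∧
  ((hospAssignees M h).card < J.cap h ∨
    ∃ r' ∈ hospAssignees M h, J.hRank h r < J.hRank h r')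

def HStable {R H : Type} [Fintype R] (J : HRT R H) (M : R → Option H) : Prop :=
  HIsMatching J M ∧ ∀ r h, ¬ HBlocks J M r h

/-- `f_k`: the number of dummy residents created for lecturer `k`, namely
`max 0 ((Σ_{p ∈ P_k} c_p) - d_k)` (truncated ℕ-subtraction). -/
noncomputable def fk [Fintype P] (I : SPAST S P L) (k : L) : ℕ :=
  (∑ p ∈ Finset.univ.filter (fun p => I.lec p = k), I.cap p) - I.dcap k

/-- the dummy residents of the cloned instance -/
abbrev Dummy [Fintype P] (I : SPAST S P L) : Type := Σ k : L, Fin (fk I k)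

/-- The cloning construction from SPA-ST to HRT.  Residents are students plus
dummies; hospitals are the projects with their capacities.  A student-resident
inherits the student's preferences; a dummy of lecturer `k` finds exactly the
hospitals of `k` acceptable, all in a single first-place tie (rank `0`), and
each hospital of `k` places all dummies of `k` in a first-place tie (rank `0`)
ahead of the real residents, whose lecturer-ranks are shifted up by one. -/
noncomputable def clone [Fintype P] (I : SPAST S P L) : HRT (S ⊕ Dummy I) P where
  cap := I.cap
  acc := fun r h =>
    match r with
    | Sum.inl s => I.acc s h
    | Sum.inr d => I.lec h = d.1
  rRank := fun r h =>
    match r with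
    | Sum.inl s => I.sRank s h
    | Sum.inr _ => 0
  hRank := fun h r =>
    match r with
    | Sum.inl s => I.lRank (I.lec h) s + 1
    | Sum.inr _ => 0

/-- The concrete SPA-ST instance of Statement 3: students `s₁ s₂` (indices `0,1`),
projects `p₁ p₂ p₃` (indices `0,1,2`), lecturers `l₁ l₂` (indices `0,1`).
`s₁`: `p₁ p₂`; `s₂`: `p₂ p₃`; `p₁,p₂` offered by `l₁`, `p₃` by `l₂`; all project
capacities `1`; `l₁`: `s₂ s₁`, `l₂`: `s₂`; `d₁ = d₂ = 1`. -/
def I3 : SPAST (Fin 2) (Fin 3) (Fin 2) where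
  lec := ![0, 0, 1]
  cap := ![1, 1, 1]
  dcap := ![1, 1]
  acc := fun s p => if s = 0 then (p = 0 ∨ p = 1) else (p = 1 ∨ p = 2)
  sRank := fun s p =>
    if s = 0 then (if p = 0 then 0 else 1) else (if p = 1 then 0 else 1)
  lRank := fun _ s => if s = 1 then 0 else 1

/-- the stable matching `M' = {(r₁,h₁), (r₂,h₃), (r₃,h₂)}` of the cloned HRT
instance (`r₃` is the dummy resident of `l₁`) -/
def M3' : Fin 2 ⊕ Dummy I3 → Option (Fin 3) := fun r =>
  match r with
  | Sum.inl s => if s = 0 then some 0 else some 2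
  | Sum.inr _ => some 1

/-- the induced matching `M = {(s₁,p₁), (s₂,p₃)}` in the SPA-ST instance -/
def M3 : Fin 2 → Option (Fin 3) := fun s => if s = 0 then some 0 else some 2


lemma fk0 : fk I3 0 = 1 := by
  rw [fk, Finset.sum_filter, Fin.sum_univ_three]; simp [I3]

lemma fk1 : fk I3 1 = 0 := by
  rw [fk, Finset.sum_filter, Fin.sum_univ_three]; simp [I3]

noncomputable def d0 : Dummy I3 := ⟨0, ⟨0, by rw [fk0]; norm_num⟩⟩

lemma fin2_cases (s : Fin 2) : s = 0 ∨ s = 1 := by omega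

lemma fin3_cases (p : Fin 3) : p = 0 ∨ p = 1 ∨ p = 2 := by omega

lemma dummy_eq (d : Dummy I3) : d = d0 := by
  obtain ⟨k, i⟩ := d
  rcases fin2_cases k with hk | hk <;> subst hk
  · have h2 : i = (⟨0, by rw [fk0]; norm_num⟩ : Fin (fk I3 0)) := by
      apply Fin.ext
      have h1 := i.isLt
      have h3 := fk0
      simp only [Fin.val_mk]
      omega
    rw [h2]; rfl
  · exfalso
    have h1 := i.isLt
    have h3 := fk1
    omega

lemma M3'0 : M3' (Sum.inl 0) = some 0 := rfl
lemma M3'1 : M3' (Sum.inl 1) = some 2 := rfl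
lemma M3'd (d : Dummy I3) : M3' (Sum.inr d) = some 1 := rfl

lemma hosp0 : hospAssignees M3' (0 : Fin 3) = {Sum.inl 0} := by
  ext r
  simp only [hospAssignees, Finset.mem_filter, Finset.mem_univ, true_and,
    Finset.mem_singleton]
  rcases r with s | d
  · rcases fin2_cases s with h | h <;> subst h <;> simp [M3'0, M3'1]
  · simp [M3'd]

lemma hosp2 : hospAssignees M3' (2 : Fin 3) = {Sum.inl 1} := by
  ext r
  simp only [hospAssignees, Finset.mem_filter, Finset.mem_univ, true_and,
    Finset.mem_singleton]
  rcases r with s | d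
  · rcases fin2_cases s with h | h <;> subst h <;> simp [M3'0, M3'1]
  · simp [M3'd]

lemma hosp1 : hospAssignees M3' (1 : Fin 3) = {Sum.inr d0} := by
  ext r
  simp only [hospAssignees, Finset.mem_filter, Finset.mem_univ, true_and,
    Finset.mem_singleton]
  rcases r with s | d
  · rcases fin2_cases s with h | h <;> subst h <;> simp [M3'0, M3'1]
  · simp [M3'd, dummy_eq d]

lemma M30 : M3 0 = some 0 := rfl
lemma M31 : M3 1 = some 2 := rfl

lemma proj1_empty : projAssignees M3 (1 : Fin 3) = ∅ := by
  ext s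
  rcases fin2_cases s with h | h <;> subst h <;>
    simp [projAssignees, M30, M31]

lemma proj0 : projAssignees M3 (0 : Fin 3) = {0} := by
  ext s
  rcases fin2_cases s with h | h <;> subst h <;>
    simp [projAssignees, M30, M31]

lemma proj2 : projAssignees M3 (2 : Fin 3) = {1} := by
  ext s
  rcases fin2_cases s with h | h <;> subst h <;>
    simp [projAssignees, M30, M31]

lemma lec0 : lecAssignees I3 M3 0 = {0} := by
  ext s
  simp only [lecAssignees, Finset.mem_filter, Finset.mem_univ, true_and,
    Finset.mem_singleton]
  rcases fin2_cases s with h | h <;> subst h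
  · constructor
    · intro _; rfl
    · intro _; exact ⟨0, M30, rfl⟩
  · constructor
    · rintro ⟨p, hp, hl⟩
      rw [M31] at hp
      have : p = 2 := Option.some_inj.mp hp.symm
      subst this
      exact absurd hl (by decide)
    · intro h; exact absurd h (by decide)

lemma lec1 : lecAssignees I3 M3 1 = {1} := by
  ext s
  simp only [lecAssignees, Finset.mem_filter, Finset.mem_univ, true_and,
    Finset.mem_singleton]
  rcases fin2_cases s with h | h <;> subst h
  · constructor
    · rintro ⟨p, hp, hl⟩
      rw [M30] at hp
      have : p = 0 := Option.some_inj.mp hp.symm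
      subst this
      exact absurd hl (by decide)
    · intro h; exact absurd h (by decide)
  · constructor
    · intro _; rfl
    · intro _; exact ⟨2, M31, rfl⟩

lemma lec11 : I3.lec 1 = 0 := rfl

lemma blocks3 : Blocks I3 M3 1 1 := by
  refine ⟨⟨?_, Or.inr ⟨2, M31, ?_⟩⟩, Or.inr (Or.inl ⟨?_, ?_, Or.inr ⟨0, ?_, ?_⟩⟩)⟩
  · simp [I3]
  · simp [I3]
  · simp only [ProjFull, proj1_empty, Finset.card_empty]
    simp [I3]
  · simp only [LecFull, lec11, lec0, Finset.card_singleton]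
    rfl
  · rw [lec11, lec0]; simp
  · simp [I3]

theorem stmt3 :
    HStable (clone I3) M3' ∧
    (∀ s, M3' (Sum.inl s) = M3 s) ∧
    IsMatching I3 M3 ∧
    Blocks I3 M3 1 1 ∧
    ¬ Stable I3 M3 := by
  have hmatch' : HIsMatching (clone I3) M3' := by
    constructor
    · rintro (s | d) h hr
      · rcases fin2_cases s with hs | hs <;> subst hs
        · rw [M3'0] at hr
          have : h = 0 := Option.some_inj.mp hr.symm
          subst this
          exact Or.inl rfl
        · rw [M3'1] at hr
          have : h = 2 := Option.some_inj.mp hr.symm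
          subst this
          exact Or.inr rfl
      · rw [M3'd] at hr
        have : h = 1 := Option.some_inj.mp hr.symm
        subst this
        rw [dummy_eq d]
        rfl
    · intro h
      rcases fin3_cases h with h1 | h1 | h1 <;> subst h1
      · rw [hosp0, Finset.card_singleton]; simp [clone, I3]
      · rw [hosp1, Finset.card_singleton]; simp [clone, I3]
      · rw [hosp2, Finset.card_singleton]; simp [clone, I3]
  refine ⟨⟨hmatch', ?_⟩, ?_, ?_, blocks3, ?_⟩
  · rintro (s | d) h ⟨hacc, hmove, hpref⟩
    · rcases fin2_cases s with hs | hs <;> subst hs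
      · -- s1 assigned h0 at rank 0: cannot improve
        rcases hmove with hnone | ⟨h', hh', hlt⟩
        · rw [M3'0] at hnone; exact absurd hnone (Option.some_ne_none _)
        · rw [M3'0] at hh'
          have : h' = 0 := Option.some_inj.mp hh'.symm
          subst this
          have h0 : (clone I3).rRank (Sum.inl 0) 0 = 0 := rfl
          rw [h0] at hlt
          exact Nat.not_lt_zero _ hlt
      · -- s2 assigned h2; only improvement is h = 1
        rcases hmove with hnone | ⟨h', hh', hlt⟩
        · rw [M3'1] at hnone; exact absurd hnone (Option.some_ne_none _)
        · rw [M3'1] at hh'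
          have : h' = 2 := Option.some_inj.mp hh'.symm
          subst this
          have hh1 : h = 1 := by
            rcases fin3_cases h with h1 | h1 | h1 <;> subst h1
            · exact absurd hacc (by intro hc; simp [clone, I3] at hc)
            · rfl
            · exact absurd hlt (lt_irrefl _)
          subst hh1
          rcases hpref with hlt' | ⟨r', hr', hrk⟩
          · rw [hosp1] at hlt'
            simp only [Finset.card_singleton] at hlt'
            exact absurd hlt' (by simp [clone, I3])
          · rw [hosp1] at hr'
            simp only [Finset.mem_singleton] at hr'
            subst hr'
            have h1 : (clone I3).hRank 1 (Sum.inr d0) = 0 := rfl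
            rw [h1] at hrk
            exact Nat.not_lt_zero _ hrk
    · -- dummy has rank 0 everywhere and is assigned
      rcases hmove with hnone | ⟨h', hh', hlt⟩
      · rw [M3'd] at hnone; exact absurd hnone (Option.some_ne_none _)
      · have h0 : (clone I3).rRank (Sum.inr d) h' = 0 := rfl
        rw [h0] at hlt
        exact Nat.not_lt_zero _ hlt
  · intro s; rcases fin2_cases s with h | h <;> subst h <;> rfl
  · refine ⟨?_, ?_, ?_⟩
    · intro s p hp
      rcases fin2_cases s with h | h <;> subst h
      · rw [M30] at hp
        have : p = 0 := Option.some_inj.mp hp.symm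
        subst this; simp [I3]
      · rw [M31] at hp
        have : p = 2 := Option.some_inj.mp hp.symm
        subst this; simp [I3]
    · intro p
      rcases fin3_cases p with h | h | h <;> subst h
      · rw [proj0]; simp [I3]
      · rw [proj1_empty]; simp
      · rw [proj2]; simp [I3]
    · intro k
      rcases fin2_cases k with h | h <;> subst h
      · rw [lec0]; simp [I3]
      · rw [lec1]; simp [I3]
  · rintro ⟨-, hnb⟩
    exact hnb 1 1 blocks3
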